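/- Let G = {g₁,…,g_t} be a finite set of nonzero polynomials in F[x₁,…,x_m] over a field F with a fixed monomial order, and suppose that for all i ≠ j the S-polynomial S(gᵢ, gⱼ) reduces to 0 modulo G. Then for every nonzero f in the ideal generated by G, some g ∈ G has leading term dividing the leading term of f (i.e., G is a Gröbner basis of ⟨G⟩). Conversely, if G is a Gröbner basis of ⟨G⟩ then all S-polynomials S(gᵢ, gⱼ) reduce to 0 modulo G. -/

import Mathlib

/-- A monomial order on monomials in variables `σ`. -/
structure MonomialOrd (σ : Type) : Type where
  le : (σ →₀ ℕ) → (σ →₀ ℕ) → Prop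
  le_refl : ∀ a, le a a
  le_trans : ∀ a b c, le a b → le b c → le a c
  le_antisymm : ∀ a b, le a b → le b a → a = b
  le_total : ∀ a b, le a b ∨ le b a
  add_right : ∀ a b r, le a b ↔ le (a + r) (b + r)
  le_add : ∀ a r, le a (a + r)

/-- `μ` is the leading monomial of `f` with respect to the monomial order `ord`. -/
def IsLeadingMonomial {σ F : Type} [Field F] (ord : MonomialOrd σ)
    (f : MvPolynomial σ F) (μ : σ →₀ ℕ) : Prop :=
  μ ∈ f.support ∧ ∀ ν ∈ f.support, ord.le ν μ

/-- The leading term of `g` divides the leading term of `f`. -/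
def LeadTermDvd {σ F : Type} [Field F] (ord : MonomialOrd σ)
    (g f : MvPolynomial σ F) : Prop :=
  ∃ μg μf, IsLeadingMonomial ord g μg ∧ IsLeadingMonomial ord f μf ∧ μg ≤ μf

/-- `s` is the S-polynomial of `f` and `g`:
`S(f,g) = x^(γ-μf)/lc(f) · f − x^(γ-μg)/lc(g) · g` where `γ = μf ⊔ μg`. -/
def IsSPolynomial {σ F : Type} [Field F] (ord : MonomialOrd σ)
    (f g s : MvPolynomial σ F) : Prop :=
  ∃ (μf μg γ : σ →₀ ℕ), IsLeadingMonomial ord f μf ∧ IsLeadingMonomial ord g μg ∧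
    (∀ i, γ i = max (μf i) (μg i)) ∧
    s = (MvPolynomial.coeff μf f)⁻¹ • (MvPolynomial.monomial (γ - μf) (1 : F) * f)
      - (MvPolynomial.coeff μg g)⁻¹ • (MvPolynomial.monomial (γ - μg) (1 : F) * g)

/-- `f` reduces to `r` modulo `g` in one step: the leading term of `g` divides a
term of `f`, and `r = f − (that term / LT(g)) · g`. -/
def ReduceStep {σ F : Type} [Field F] (ord : MonomialOrd σ)
    (g f r : MvPolynomial σ F) : Prop :=
  ∃ μ ∈ f.support, ∃ μg, IsLeadingMonomial ord g μg ∧ μg ≤ μ ∧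
    r = f - (MvPolynomial.coeff μ f / MvPolynomial.coeff μg g) •
        (MvPolynomial.monomial (μ - μg) (1 : F) * g)

/-- `f` reduces to `r` modulo `G`: a finite chain of one-step reductions by
elements of `G`. -/
def ReducesTo {σ F : Type} [Field F] (ord : MonomialOrd σ)
    (G : Finset (MvPolynomial σ F)) (f r : MvPolynomial σ F) : Prop :=
  Relation.ReflTransGen (fun p q => ∃ g ∈ G, ReduceStep ord g p q) f r

namespace MonomialOrd
variable {σ : Type} {ord : MonomialOrd σ}
def lt (ord : MonomialOrd σ) (a b : σ →₀ ℕ) : Prop := ord.le a b ∧ a ≠ b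
lemma ole_of_le {a b : σ →₀ ℕ} (h : a ≤ b) : ord.le a b := by
  have : b = a + (b - a) := by ext i; have := Finsupp.le_def.mp h i; simp; omega
  rw [this]; exact ord.le_add a _
lemma lt_of_lt_of_le {a b c : σ →₀ ℕ} (h : ord.lt a b) (h' : ord.le b c) : ord.lt a c :=
  ⟨ord.le_trans _ _ _ h.1 h', fun e => h.2 (ord.le_antisymm _ _ h.1 (e ▸ h'))⟩
lemma lt_of_le_of_lt {a b c : σ →₀ ℕ} (h : ord.le a b) (h' : ord.lt b c) : ord.lt a c :=
  ⟨ord.le_trans _ _ _ h h'.1, fun e => h'.2 (ord.le_antisymm _ _ h'.1 (e ▸ h))⟩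
lemma le_add_le {a b c d : σ →₀ ℕ} (h : ord.le a b) (h' : ord.le c d) :
    ord.le (a + c) (b + d) := by
  refine ord.le_trans _ (b + c) _ ((ord.add_right a b c).mp h) ?_
  rw [add_comm b c, add_comm b d]; exact (ord.add_right c d b).mp h'
lemma lt_add_left {a b : σ →₀ ℕ} (h : ord.lt a b) (r : σ →₀ ℕ) : ord.lt (r + a) (r + b) := by
  rw [add_comm r a, add_comm r b]
  exact ⟨(ord.add_right a b r).mp h.1, fun e => h.2 (add_right_cancel e)⟩
lemma wf [Finite σ] : WellFounded (ord.lt) := by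
  letI : IsTrans (σ →₀ ℕ) ord.lt := ⟨fun _ _ _ h h' => lt_of_lt_of_le h h'.1⟩
  letI : IsIrrefl (σ →₀ ℕ) ord.lt := ⟨fun a h => h.2 rfl⟩
  letI : IsStrictOrder (σ →₀ ℕ) ord.lt := ⟨⟩
  rw [RelEmbedding.wellFounded_iff_isEmpty]
  constructor; rintro ⟨f, hf⟩
  obtain ⟨i, j, hij, hle⟩ := Set.isPWO_of_wellQuasiOrderedLE (Set.univ : Set (σ →₀ ℕ)) (fun n => ⟨f n, trivial⟩)
  have h1 : ord.lt (f j) (f i) := hf.mpr hij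
  exact h1.2 (ord.le_antisymm _ _ h1.1 (ole_of_le hle))
lemma exists_max (ord : MonomialOrd σ) (s : Finset (σ →₀ ℕ)) (hs : s.Nonempty) :
    ∃ μ ∈ s, ∀ ν ∈ s, ord.le ν μ := by
  classical
  induction s using Finset.induction with
  | empty => exact absurd hs (by simp)
  | @insert a s ha ih =>
    rcases s.eq_empty_or_nonempty with rfl | hs'
    · exact ⟨a, by simp, by simp [ord.le_refl]⟩
    · obtain ⟨μ, hμs, hμ⟩ := ih hs'
      rcases ord.le_total a μ with h | h
      · refine ⟨μ, by simp [hμs], fun ν hν => ?_⟩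
        rcases Finset.mem_insert.mp hν with rfl | hν
        · exact h
        · exact hμ _ hν
      · refine ⟨a, by simp, fun ν hν => ?_⟩
        rcases Finset.mem_insert.mp hν with rfl | hν
        · exact ord.le_refl _
        · exact ord.le_trans _ _ _ (hμ _ hν) h
end MonomialOrd

open MvPolynomial MonomialOrd

namespace Buch
variable {σ F : Type} [Field F] {ord : MonomialOrd σ}

lemma lm_exists {f : MvPolynomial σ F} (hf : f ≠ 0) : ∃ μ, IsLeadingMonomial ord f μ := by
  obtain ⟨μ, hμ, h⟩ := ord.exists_max f.support (by simpa using hf)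
  exact ⟨μ, hμ, h⟩

lemma lm_unique {f : MvPolynomial σ F} {μ ν} (h : IsLeadingMonomial ord f μ)
    (h' : IsLeadingMonomial ord f ν) : μ = ν :=
  ord.le_antisymm _ _ (h'.2 μ h.1) (h.2 ν h'.1)

lemma lm_ne_zero {f : MvPolynomial σ F} {μ} (h : IsLeadingMonomial ord f μ) : f ≠ 0 := by
  intro e; rw [e] at h; simpa using h.1

lemma coeff_lm_ne_zero {f : MvPolynomial σ F} {μ} (h : IsLeadingMonomial ord f μ) :
    coeff μ f ≠ 0 := by simpa [mem_support_iff] using h.1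

/-- coefficient of the product at sum of leading monomials -/
lemma coeff_mul_lm {f g : MvPolynomial σ F} {μf μg} (hf : IsLeadingMonomial ord f μf)
    (hg : IsLeadingMonomial ord g μg) :
    coeff (μf + μg) (f * g) = coeff μf f * coeff μg g := by
  classical
  rw [coeff_mul]
  rw [Finset.sum_eq_single (μf, μg)]
  · rintro ⟨a, b⟩ hab hne
    rw [Finset.HasAntidiagonal.mem_antidiagonal] at hab
    by_cases ha : a ∈ f.support
    · by_cases hb : b ∈ g.support
      · exfalso
        have h1 : ord.le (a + b) (μf + b) := (ord.add_right a μf b).mp (hf.2 a ha)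
        have h2 : ord.le (μf + b) (μf + μg) := by
          rw [add_comm μf b, add_comm μf μg]
          exact (ord.add_right b μg μf).mp (hg.2 b hb)
        rw [hab] at h1
        have hbb : μf + b = μf + μg := ord.le_antisymm _ _ h2 (ord.le_trans _ _ _ h1 (ord.le_refl _))
        have hb2 : b = μg := add_left_cancel hbb
        subst hb2
        exact hne (Prod.ext (add_right_cancel hab) rfl)
      · simp [mem_support_iff, not_not] at hb; simp [hb]
    · simp [mem_support_iff, not_not] at ha; simp [ha]
  · intro h; exfalso; exact h (Finset.HasAntidiagonal.mem_antidiagonal.mpr rfl)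

lemma lm_mul {f g : MvPolynomial σ F} {μf μg} (hf : IsLeadingMonomial ord f μf)
    (hg : IsLeadingMonomial ord g μg) : IsLeadingMonomial ord (f * g) (μf + μg) := by
  classical
  constructor
  · rw [mem_support_iff, coeff_mul_lm hf hg]
    exact mul_ne_zero (coeff_lm_ne_zero hf) (coeff_lm_ne_zero hg)
  · intro ν hν
    obtain ⟨a, ha, b, hb, rfl⟩ := Finset.mem_add.mp (support_mul f g hν)
    exact le_add_le (hf.2 a ha) (hg.2 b hb)

lemma support_monomial_mul {δ : σ →₀ ℕ} {q : MvPolynomial σ F} {ν}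
    (h : ν ∈ (monomial δ (1:F) * q).support) : ∃ b ∈ q.support, ν = δ + b := by
  classical
  obtain ⟨a, ha, b, hb, rfl⟩ := Finset.mem_add.mp (support_mul _ q h)
  rw [support_monomial, if_neg one_ne_zero, Finset.mem_singleton] at ha
  exact ⟨b, hb, by rw [ha]⟩

/-- `f` has a representation `∑ h g * g` over `G` with all monomials of each
`h g * g` satisfying `P`. -/
def StdRep (G : Finset (MvPolynomial σ F)) (P : (σ →₀ ℕ) → Prop) (f : MvPolynomial σ F) : Prop :=
  ∃ h : MvPolynomial σ F → MvPolynomial σ F,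
    f = ∑ g ∈ G, h g * g ∧ ∀ g ∈ G, ∀ ν ∈ (h g * g).support, P ν

variable {G : Finset (MvPolynomial σ F)} {P : (σ →₀ ℕ) → Prop}

lemma StdRep.zero : StdRep G P 0 := ⟨0, by simp, by simp⟩

lemma StdRep.add {f f'} (h : StdRep G P f) (h' : StdRep G P f') :
    StdRep G P (f + f') := by
  classical
  obtain ⟨a, rfl, ha⟩ := h; obtain ⟨b, rfl, hb⟩ := h'
  refine ⟨a + b, by simp [add_mul, Finset.sum_add_distrib], fun g hg ν hν => ?_⟩
  have hν' : ν ∈ (a g * g + b g * g).support := by simpa [add_mul] using hν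
  rcases Finset.mem_union.mp (MvPolynomial.support_add hν') with h | h
  · exact ha g hg ν h
  · exact hb g hg ν h

lemma StdRep.mono {Q : (σ →₀ ℕ) → Prop} (hPQ : ∀ ν, P ν → Q ν) {f}
    (h : StdRep G P f) : StdRep G Q f := by
  obtain ⟨a, rfl, ha⟩ := h
  exact ⟨a, rfl, fun g hg ν hν => hPQ ν (ha g hg ν hν)⟩

lemma StdRep.single {g0 : MvPolynomial σ F} (hg0 : g0 ∈ G) (c : F) (δ : σ →₀ ℕ)
    (hb : ∀ ν ∈ (monomial δ (1:F) * g0).support, P ν) :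
    StdRep G P (c • (monomial δ (1:F) * g0)) := by
  classical
  refine ⟨fun g => if g = g0 then c • monomial δ (1:F) else 0, ?_, ?_⟩
  · have heq : ∀ g ∈ G, (if g = g0 then c • monomial δ (1:F) else 0) * g
        = if g = g0 then c • (monomial δ (1:F) * g0) else 0 := by
      intro g hg; split
      · next h => subst h; rw [smul_mul_assoc]
      · rw [zero_mul]
    rw [Finset.sum_congr rfl heq, Finset.sum_ite_eq' G g0, if_pos hg0]
  · intro g hg ν hν
    by_cases h : g = g0
    · subst h
      have hν' : ν ∈ (c • (monomial δ (1:F) * g)).support := by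
        simpa [smul_mul_assoc] using hν
      exact hb ν (Finsupp.support_smul hν')
    · simp [h] at hν

lemma StdRep.sum {ι : Type} (s : Finset ι) (f : ι → MvPolynomial σ F)
    (h : ∀ i ∈ s, StdRep G P (f i)) : StdRep G P (∑ i ∈ s, f i) := by
  classical
  induction s using Finset.induction with
  | empty => simpa using StdRep.zero
  | @insert a s ha ih =>
    rw [Finset.sum_insert ha]
    exact (h a (Finset.mem_insert_self a s)).add
      (ih fun i hi => h i (Finset.mem_insert_of_mem hi))

/-- Reduction to zero yields a standard representation. -/
lemma stdRep_of_reducesTo (hP : ∀ {μ ν}, ord.le ν μ → P μ → P ν)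
    {f : MvPolynomial σ F} (hred : ReducesTo ord G f 0) :
    (∀ ν ∈ f.support, P ν) → StdRep G P f := by
  classical
  induction hred using Relation.ReflTransGen.head_induction_on with
  | refl => intro _; exact StdRep.zero
  | head hstep _ ih =>
    rename_i p q _
    intro hsupp
    obtain ⟨g0, hg0, μ, hμ, μg, hlmg, hle, rfl⟩ := hstep
    set c : F := MvPolynomial.coeff μ p / MvPolynomial.coeff μg g0 with hc
    set M : MvPolynomial σ F := monomial (μ - μg) (1:F) * g0 with hM
    have hMP : ∀ ν ∈ M.support, P ν := by
      intro ν hν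
      obtain ⟨b, hb, rfl⟩ := support_monomial_mul hν
      have heq : μ - μg + μg = μ := by
        ext i; have := Finsupp.le_def.mp hle i; simp; omega
      have h1 : ord.le (μ - μg + b) μ := by
        have h2 : ord.le (μ - μg + b) (μ - μg + μg) := by
          rw [add_comm _ b, add_comm _ μg]
          exact (ord.add_right b μg (μ - μg)).mp (hlmg.2 b hb)
        rwa [heq] at h2
      exact hP h1 (hsupp μ hμ)
    have hq : ∀ ν ∈ (p - c • M).support, P ν := by
      intro ν hν
      rcases Finset.mem_union.mp (MvPolynomial.support_sub σ p (c • M) hν) with h | h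
      · exact hsupp ν h
      · exact hMP ν (Finsupp.support_smul h)
    have h1 : p = (p - c • M) + c • M := by ring
    rw [h1]
    exact (ih hq).add (StdRep.single hg0 c (μ - μg) hMP)

lemma reducesTo_zero_of_groebner [Finite σ]
    (hGB : ∀ f ∈ Ideal.span (G : Set (MvPolynomial σ F)), f ≠ 0 →
      ∃ g ∈ G, LeadTermDvd ord g f)
    {f : MvPolynomial σ F} (hf : f ∈ Ideal.span (G : Set (MvPolynomial σ F))) :
    ReducesTo ord G f 0 := by
  classical
  by_cases hf0 : f = 0
  · subst hf0; exact Relation.ReflTransGen.refl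
  obtain ⟨μ, hμ⟩ := lm_exists (ord := ord) hf0
  -- well-founded induction on the leading monomial
  revert hf hμ hf0
  revert f
  induction μ using (wf (ord := ord)).induction with
  | _ μ ih =>
    intro f hmem hne hμ
    obtain ⟨g, hg, μg, μf', hlmg, hlmf', hle⟩ := hGB f hmem hne
    have hμf' : μ = μf' := lm_unique hμ hlmf'
    subst hμf'
    set c : F := coeff μ f / coeff μg g with hc
    set M : MvPolynomial σ F := monomial (μ - μg) (1:F) * g with hM
    set r : MvPolynomial σ F := f - c • M with hr
    have hstep : ∃ g' ∈ G, ReduceStep ord g' f r :=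
      ⟨g, hg, μ, hμ.1, μg, hlmg, hle, rfl⟩
    have heq : μ - μg + μg = μ := by
      ext i; have := Finsupp.le_def.mp hle i; simp; omega
    -- coeff μ r = 0
    have hcoeffM : coeff μ M = coeff μg g := by
      have h3 := coeff_monomial_mul (R := F) μg (μ - μg) (1:F) g
      rw [heq] at h3
      rw [hM, h3, one_mul]
    have hcr : coeff μ r = 0 := by
      rw [hr, coeff_sub, coeff_smul, hcoeffM, hc, smul_eq_mul,
        div_mul_cancel₀ _ (coeff_lm_ne_zero hlmg), sub_self]
    -- all monomials of r are < μ
    have hrlt : ∀ ν ∈ r.support, ord.lt ν μ := by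
      intro ν hν
      have hne : ν ≠ μ := by
        intro e; subst e; exact (mem_support_iff.mp hν) hcr
      refine ⟨?_, hne⟩
      rcases Finset.mem_union.mp (MvPolynomial.support_sub σ f (c • M) hν) with h | h
      · exact hμ.2 ν h
      · obtain ⟨b, hb, rfl⟩ := support_monomial_mul (Finsupp.support_smul h)
        have h2 : ord.le (μ - μg + b) (μ - μg + μg) := by
          rw [add_comm _ b, add_comm _ μg]
          exact (ord.add_right b μg (μ - μg)).mp (hlmg.2 b hb)
        rwa [heq] at h2
    -- r is in the ideal
    have hrI : r ∈ Ideal.span (G : Set (MvPolynomial σ F)) := by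
      refine Submodule.sub_mem _ hmem ?_
      refine Submodule.smul_of_tower_mem _ c ?_
      exact Ideal.mul_mem_left _ _ (Ideal.subset_span hg)
    by_cases hr0 : r = 0
    · exact Relation.ReflTransGen.head hstep (hr0 ▸ Relation.ReflTransGen.refl)
    · obtain ⟨μr, hμr⟩ := lm_exists (ord := ord) hr0
      exact Relation.ReflTransGen.head hstep
        (ih μr (hrlt μr hμr.1) hrI hr0 hμr)

lemma StdRep.smul {f} (c : F) (h : StdRep G P f) : StdRep G P (c • f) := by
  obtain ⟨a, rfl, ha⟩ := h
  refine ⟨fun g => c • a g, by simp [Finset.smul_sum, smul_mul_assoc], fun g hg ν hν => ?_⟩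
  have hν' : ν ∈ (c • (a g * g)).support := by simpa [smul_mul_assoc] using hν
  exact ha g hg ν (Finsupp.support_smul hν')

lemma StdRep.monomial_mul {f} (δ : σ →₀ ℕ) (h : StdRep G P f) :
    StdRep G (fun ν => ∃ ν₀, P ν₀ ∧ ν = δ + ν₀) (monomial δ (1:F) * f) := by
  obtain ⟨a, rfl, ha⟩ := h
  refine ⟨fun g => monomial δ (1:F) * a g, ?_, fun g hg ν hν => ?_⟩
  · rw [Finset.mul_sum]
    exact Finset.sum_congr rfl fun g hg => (mul_assoc _ _ _).symm
  have hν' : ν ∈ (monomial δ (1:F) * (a g * g)).support := by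
    simpa [mul_assoc] using hν
  obtain ⟨b, hb, rfl⟩ := support_monomial_mul hν'
  exact ⟨b, ha g hg b hb, rfl⟩

lemma coeff_eq_sum {h : MvPolynomial σ F → MvPolynomial σ F} {ν : σ →₀ ℕ} :
    coeff ν (∑ g ∈ G, h g * g) = ∑ g ∈ G, coeff ν (h g * g) := by
  classical
  induction G using Finset.induction with
  | empty => simp
  | @insert a s ha ih => rw [Finset.sum_insert ha, Finset.sum_insert ha, coeff_add, ih]

lemma stdRep_attained {f : MvPolynomial σ F} (hf : f ≠ 0) (hrep : StdRep G P f) :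
    ∃ B', P B' ∧ ∃ h : MvPolynomial σ F → MvPolynomial σ F,
      f = ∑ g ∈ G, h g * g ∧ (∀ g ∈ G, ∀ ν ∈ (h g * g).support, ord.le ν B') ∧
      ∃ g1 ∈ G, IsLeadingMonomial ord (h g1 * g1) B' := by
  classical
  obtain ⟨h, rfl, hP⟩ := hrep
  set U : Finset (σ →₀ ℕ) := G.biUnion (fun g => (h g * g).support) with hU
  have hUne : U.Nonempty := by
    obtain ⟨ν₀, hν₀⟩ := MvPolynomial.support_nonempty.mpr hf
    have : coeff ν₀ (∑ g ∈ G, h g * g) ≠ 0 := mem_support_iff.mp hν₀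
    rw [coeff_eq_sum] at this
    obtain ⟨g, hg, hgne⟩ := Finset.exists_ne_zero_of_sum_ne_zero this
    exact ⟨ν₀, Finset.mem_biUnion.mpr ⟨g, hg, mem_support_iff.mpr hgne⟩⟩
  obtain ⟨B', hB'U, hB'max⟩ := ord.exists_max U hUne
  obtain ⟨g1, hg1, hB'g1⟩ := Finset.mem_biUnion.mp hB'U
  refine ⟨B', hP g1 hg1 B' hB'g1, h, rfl, ?_, g1, hg1, hB'g1, ?_⟩
  · intro g hg ν hν
    exact hB'max ν (Finset.mem_biUnion.mpr ⟨g, hg, hν⟩)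
  · intro ν hν
    exact hB'max ν (Finset.mem_biUnion.mpr ⟨g1, hg1, hν⟩)

lemma le_sup_ord {μi μj : σ →₀ ℕ} {b : σ →₀ ℕ} (hb : ord.le b μi) :
    ord.le (μi ⊔ μj - μi + b) (μi ⊔ μj) := by
  have heq : μi ⊔ μj - μi + μi = μi ⊔ μj := by
    ext i; simp only [Finsupp.add_apply, Finsupp.tsub_apply, Finsupp.sup_apply]; omega
  have h2 : ord.le (μi ⊔ μj - μi + b) (μi ⊔ μj - μi + μi) := by
    rw [add_comm _ b, add_comm _ μi]
    exact (ord.add_right b μi (μi ⊔ μj - μi)).mp hb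
  rwa [heq] at h2

lemma coeff_sup_monomial_mul {μi : σ →₀ ℕ} (μj : σ →₀ ℕ) {gi : MvPolynomial σ F} :
    coeff (μi ⊔ μj) (monomial (μi ⊔ μj - μi) (1:F) * gi) = coeff μi gi := by
  have heq : μi ⊔ μj - μi + μi = μi ⊔ μj := by
    ext i; simp only [Finsupp.add_apply, Finsupp.tsub_apply, Finsupp.sup_apply]; omega
  have h3 := coeff_monomial_mul (R := F) μi (μi ⊔ μj - μi) (1:F) gi
  rw [heq] at h3
  rw [h3, one_mul]

lemma spoly_is {gi gj : MvPolynomial σ F} {μi μj : σ →₀ ℕ}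
    (hi : IsLeadingMonomial ord gi μi) (hj : IsLeadingMonomial ord gj μj) :
    IsSPolynomial ord gi gj
      ((coeff μi gi)⁻¹ • (monomial (μi ⊔ μj - μi) (1:F) * gi)
        - (coeff μj gj)⁻¹ • (monomial (μi ⊔ μj - μj) (1:F) * gj)) := by
  refine ⟨μi, μj, μi ⊔ μj, hi, hj, fun i => ?_, rfl⟩
  rw [Finsupp.sup_apply]

lemma spoly_support {gi gj : MvPolynomial σ F} {μi μj : σ →₀ ℕ}
    (hi : IsLeadingMonomial ord gi μi) (hj : IsLeadingMonomial ord gj μj) :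
    ∀ ν ∈ ((coeff μi gi)⁻¹ • (monomial (μi ⊔ μj - μi) (1:F) * gi)
        - (coeff μj gj)⁻¹ • (monomial (μi ⊔ μj - μj) (1:F) * gj)).support,
      ord.lt ν (μi ⊔ μj) := by
  classical
  intro ν hν
  set s := (coeff μi gi)⁻¹ • (monomial (μi ⊔ μj - μi) (1:F) * gi)
        - (coeff μj gj)⁻¹ • (monomial (μi ⊔ μj - μj) (1:F) * gj) with hs
  have h4 : coeff (μi ⊔ μj) (monomial (μi ⊔ μj - μj) (1:F) * gj) = coeff μj gj := by
    have h5 := coeff_sup_monomial_mul (F := F) (μi := μj) μi (gi := gj)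
    rwa [sup_comm μj μi] at h5
  have hcoeff : coeff (μi ⊔ μj) s = 0 := by
    rw [hs, coeff_sub, coeff_smul, coeff_smul, coeff_sup_monomial_mul μj, h4,
      smul_eq_mul, smul_eq_mul, inv_mul_cancel₀ (coeff_lm_ne_zero hi),
      inv_mul_cancel₀ (coeff_lm_ne_zero hj), sub_self]
  have hne : ν ≠ μi ⊔ μj := fun e => (mem_support_iff.mp hν) (e ▸ hcoeff)
  refine ⟨?_, hne⟩
  rcases Finset.mem_union.mp (MvPolynomial.support_sub σ _ _ hν) with h | h
  · obtain ⟨b, hb, rfl⟩ := support_monomial_mul (Finsupp.support_smul h)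
    exact le_sup_ord (hi.2 b hb)
  · obtain ⟨b, hb, rfl⟩ := support_monomial_mul (Finsupp.support_smul h)
    have := le_sup_ord (ord := ord) (μj := μi) (hj.2 b hb)
    rwa [sup_comm μj μi] at this

lemma spoly_comb [Finite σ]
    (hS : ∀ gi ∈ G, ∀ gj ∈ G, gi ≠ gj → ∀ s, IsSPolynomial ord gi gj s → ReducesTo ord G s 0)
    (B : σ →₀ ℕ) (T : Finset (MvPolynomial σ F)) (hTG : T ⊆ G)
    (c : MvPolynomial σ F → F) (μ : MvPolynomial σ F → (σ →₀ ℕ))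
    (hμ : ∀ g ∈ T, IsLeadingMonomial ord g (μ g))
    (hB : ∀ g ∈ T, μ g ≤ B)
    (hc : ∑ g ∈ T, c g = 0) :
    StdRep G (fun ν => ord.lt ν B)
      (∑ g ∈ T, c g • ((coeff (μ g) g)⁻¹ • (monomial (B - μ g) (1:F) * g))) := by
  classical
  set p : MvPolynomial σ F → MvPolynomial σ F :=
    fun g => (coeff (μ g) g)⁻¹ • (monomial (B - μ g) (1:F) * g) with hp
  obtain ⟨n, hn⟩ : ∃ n, T.card = n := ⟨_, rfl⟩
  induction n using Nat.strong_induction_on generalizing T c with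
  | _ n ih =>
  rcases Nat.lt_or_ge n 2 with hlt | hge
  · -- card 0 or 1
    interval_cases n
    · rw [Finset.card_eq_zero] at hn; subst hn
      simpa using StdRep.zero
    · obtain ⟨g, rfl⟩ := Finset.card_eq_one.mp hn
      rw [Finset.sum_singleton] at hc ⊢
      rw [hc, zero_smul]
      exact StdRep.zero
  · -- card ≥ 2
    have hT0 : T.Nonempty := Finset.card_pos.mp (by omega)
    obtain ⟨g0, hg0⟩ := hT0
    set T' : Finset (MvPolynomial σ F) := T.erase g0 with hT'
    have hcard' : T'.card = n - 1 := by rw [hT', Finset.card_erase_of_mem hg0, hn]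
    have hT'0 : T'.Nonempty := Finset.card_pos.mp (by omega)
    obtain ⟨g1, hg1⟩ := hT'0
    have hg1T : g1 ∈ T := Finset.mem_of_mem_erase hg1
    have hne : g0 ≠ g1 := fun e => (Finset.ne_of_mem_erase hg1) e.symm
    set c' : MvPolynomial σ F → F := fun g => if g = g1 then c g1 + c g0 else c g with hc'
    have hterm : ∀ g ∈ T', c' g • p g = c g • p g + (if g = g1 then c g0 • p g1 else 0) := by
      intro g hg
      by_cases h : g = g1
      · subst h; rw [hc']; simp [add_smul]
      · rw [hc']; simp [h]
    have hsum' : ∑ g ∈ T', c' g • p g = (∑ g ∈ T', c g • p g) + c g0 • p g1 := by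
      rw [Finset.sum_congr rfl hterm, Finset.sum_add_distrib,
        Finset.sum_ite_eq' T' g1, if_pos hg1]
    have hcsum' : ∑ g ∈ T', c' g = 0 := by
      have : ∀ g ∈ T', c' g = c g + (if g = g1 then c g0 else 0) := by
        intro g hg; by_cases h : g = g1
        · subst h; rw [hc']; simp
        · rw [hc']; simp [h]
      rw [Finset.sum_congr rfl this, Finset.sum_add_distrib,
        Finset.sum_ite_eq' T' g1, if_pos hg1]
      have h6 := Finset.add_sum_erase T c hg0
      rw [← hT'] at h6
      rw [add_comm, h6, hc]
    have hTins : T = insert g0 T' := (Finset.insert_erase hg0).symm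
    have hgoal : ∑ g ∈ T, c g • p g = c g0 • (p g0 - p g1) + ∑ g ∈ T', c' g • p g := by
      rw [hsum', smul_sub, hTins, Finset.sum_insert (Finset.notMem_erase g0 T)]
      abel
    rw [hgoal]
    apply StdRep.add
    · -- the S-polynomial part
      set γ : σ →₀ ℕ := μ g0 ⊔ μ g1 with hγ
      set s : MvPolynomial σ F :=
        (coeff (μ g0) g0)⁻¹ • (monomial (γ - μ g0) (1:F) * g0)
          - (coeff (μ g1) g1)⁻¹ • (monomial (γ - μ g1) (1:F) * g1) with hsdef
      have hred : ReducesTo ord G s 0 :=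
        hS g0 (hTG hg0) g1 (hTG hg1T) hne s (spoly_is (hμ g0 hg0) (hμ g1 hg1T))
      have hstd : StdRep G (fun ν => ord.lt ν γ) s :=
        stdRep_of_reducesTo (fun h1 h2 => lt_of_le_of_lt h1 h2) hred
          (spoly_support (hμ g0 hg0) (hμ g1 hg1T))
      have hγB : γ ≤ B := sup_le (hB g0 hg0) (hB g1 hg1T)
      have hBγ : B - γ + γ = B := by
        ext i; have := Finsupp.le_def.mp hγB i
        simp only [Finsupp.add_apply, Finsupp.tsub_apply]; omega
      have hmono : StdRep G (fun ν => ord.lt ν B) (monomial (B - γ) (1:F) * s) := by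
        refine (hstd.monomial_mul (B - γ)).mono fun ν hν => ?_
        obtain ⟨ν₀, h0, rfl⟩ := hν
        have := lt_add_left h0 (B - γ)
        rwa [hBγ] at this
      have e0 : B - γ + (γ - μ g0) = B - μ g0 := by
        ext i
        have h1 := Finsupp.le_def.mp hγB i
        have h2 := Finsupp.le_def.mp (le_sup_left : μ g0 ≤ γ) i
        simp only [Finsupp.add_apply, Finsupp.tsub_apply, hγ, Finsupp.sup_apply] at *
        omega
      have e1 : B - γ + (γ - μ g1) = B - μ g1 := by
        ext i
        have h1 := Finsupp.le_def.mp hγB i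
        have h2 := Finsupp.le_def.mp (le_sup_right : μ g1 ≤ γ) i
        simp only [Finsupp.add_apply, Finsupp.tsub_apply, hγ, Finsupp.sup_apply] at *
        omega
      have hps : monomial (B - γ) (1:F) * s = p g0 - p g1 := by
        rw [hsdef, mul_sub, mul_smul_comm, mul_smul_comm, ← mul_assoc, ← mul_assoc,
          monomial_mul, monomial_mul, one_mul, e0, e1]
      rw [← hps]
      exact hmono.smul (c g0)
    · -- induction
      exact ih (n - 1) (by omega) T' ((Finset.erase_subset g0 T).trans hTG) c'
        (fun g hg => hμ g (Finset.mem_of_mem_erase hg))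
        (fun g hg => hB g (Finset.mem_of_mem_erase hg)) hcsum' hcard'

lemma lt_add_right {a b : σ →₀ ℕ} (h : ord.lt a b) (r : σ →₀ ℕ) : ord.lt (a + r) (b + r) :=
  ⟨(ord.add_right a b r).mp h.1, fun e => h.2 (add_right_cancel e)⟩

lemma groebner_of_spoly [Finite σ] (hG : ∀ g ∈ G, g ≠ 0)
    (hS : ∀ gi ∈ G, ∀ gj ∈ G, gi ≠ gj → ∀ s, IsSPolynomial ord gi gj s → ReducesTo ord G s 0)
    {f : MvPolynomial σ F} (hf : f ∈ Ideal.span (G : Set (MvPolynomial σ F))) (hf0 : f ≠ 0) :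
    ∃ g ∈ G, LeadTermDvd ord g f := by
  classical
  set D : Set (σ →₀ ℕ) := {B | StdRep G (fun ν => ord.le ν B) f} with hD
  have hDne : D.Nonempty := by
    obtain ⟨h, -, hh⟩ := Submodule.mem_span_finset.mp hf
    set B0 : σ →₀ ℕ := G.sup (fun g => (h g * g).support.sup id) with hB0
    refine ⟨B0, h, ?_, ?_⟩
    · rw [← hh]; exact Finset.sum_congr rfl fun g _ => (smul_eq_mul _ _).symm
    · intro g hg ν hν
      refine ole_of_le (le_trans ?_ (Finset.le_sup (f := fun g => (h g * g).support.sup id) hg))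
      exact Finset.le_sup (f := id) hν
  obtain ⟨B, hBD, hBmin⟩ := (wf (ord := ord)).has_min D hDne
  obtain ⟨B', hB'le, h, hfeq, hbound, g1, hg1, hlm1⟩ := stdRep_attained hf0 hBD
  have hB'B : B' = B := by
    by_contra hne
    exact hBmin B' ⟨h, hfeq, hbound⟩ ⟨hB'le, hne⟩
  subst hB'B
  by_cases hcB : coeff B' f = 0
  · -- cancellation at the top: contradiction with minimality
    exfalso
    set T : Finset (MvPolynomial σ F) := G.filter (fun g => B' ∈ (h g * g).support) with hT
    have hTG : T ⊆ G := Finset.filter_subset _ _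
    have hdata : ∀ g ∈ T, ∃ αμ : (σ →₀ ℕ) × (σ →₀ ℕ),
        IsLeadingMonomial ord (h g) αμ.1 ∧ IsLeadingMonomial ord g αμ.2 ∧ αμ.1 + αμ.2 = B' := by
      intro g hg
      obtain ⟨hgG, hmem⟩ := Finset.mem_filter.mp (hT ▸ hg)
      have hhg : h g ≠ 0 := by
        intro e; rw [e, zero_mul] at hmem; simpa using hmem
      obtain ⟨αg, hαg⟩ := lm_exists (ord := ord) hhg
      obtain ⟨μg, hμg⟩ := lm_exists (ord := ord) (hG g hgG)
      have hlmprod : IsLeadingMonomial ord (h g * g) B' :=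
        ⟨hmem, fun ν hν => hbound g hgG ν hν⟩
      exact ⟨(αg, μg), hαg, hμg, lm_unique (lm_mul hαg hμg) hlmprod⟩
    choose! αμ hα hμ hsum using hdata
    set α : MvPolynomial σ F → (σ →₀ ℕ) := fun g => (αμ g).1 with hαdef
    set μ : MvPolynomial σ F → (σ →₀ ℕ) := fun g => (αμ g).2 with hμdef
    set c : MvPolynomial σ F → F := fun g => coeff (α g) (h g) with hcdef
    set d : MvPolynomial σ F → F := fun g => c g * coeff (μ g) g with hddef
    have hd0 : ∑ g ∈ T, d g = 0 := by
      have h1 : coeff B' f = ∑ g ∈ G, coeff B' (h g * g) := by rw [hfeq, coeff_eq_sum]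
      have h2 : ∑ g ∈ T, coeff B' (h g * g) = ∑ g ∈ G, coeff B' (h g * g) := by
        refine Finset.sum_subset hTG fun g hgG hgT => ?_
        have hns : B' ∉ (h g * g).support :=
          fun hmem => hgT (hT ▸ Finset.mem_filter.mpr ⟨hgG, hmem⟩)
        exact notMem_support_iff.mp hns
      have h3 : ∀ g ∈ T, d g = coeff B' (h g * g) := by
        intro g hg
        have h4 := coeff_mul_lm (hα g hg) (hμ g hg)
        rw [hsum g hg] at h4
        rw [hddef, h4]
      rw [Finset.sum_congr rfl h3, h2, ← h1, hcB]
    have hμB : ∀ g ∈ T, μ g ≤ B' := fun g hg => by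
      rw [← hsum g hg]; exact le_add_self
    have hstd1 := spoly_comb hS B' T hTG d μ (fun g hg => hμ g hg) hμB hd0
    have hid : ∀ g ∈ T, d g • ((coeff (μ g) g)⁻¹ • (monomial (B' - μ g) (1:F) * g))
        = (c g • monomial (α g) (1:F)) * g := by
      intro g hg
      have hBα : B' - μ g = α g := by
        ext i
        have h7 := DFunLike.congr_fun (hsum g hg) i
        simp only [hαdef, hμdef, Finsupp.add_apply, Finsupp.tsub_apply] at h7 ⊢
        omega
      rw [hBα, smul_smul, hddef, mul_assoc,
        mul_inv_cancel₀ (coeff_lm_ne_zero (hμ g hg)), mul_one, smul_mul_assoc]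
    rw [Finset.sum_congr rfl hid] at hstd1
    set S1 : MvPolynomial σ F := ∑ g ∈ T, (c g • monomial (α g) (1:F)) * g with hS1
    set q : MvPolynomial σ F → MvPolynomial σ F :=
      fun g => if g ∈ T then h g - c g • monomial (α g) (1:F) else h g with hqdef
    have hqmul : ∀ g ∈ G, q g * g
        = h g * g - (if g ∈ T then (c g • monomial (α g) (1:F)) * g else 0) := by
      intro g hg
      by_cases hgT : g ∈ T
      · rw [hqdef]; simp only [hgT, if_true, ite_true]; rw [sub_mul]
      · rw [hqdef]; simp only [hgT, if_false, ite_false]; rw [sub_zero]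
    have hfS : f = S1 + ∑ g ∈ G, q g * g := by
      rw [Finset.sum_congr rfl hqmul, Finset.sum_sub_distrib, ← hfeq,
        Finset.sum_ite_mem, Finset.inter_eq_right.mpr hTG, ← hS1]
      abel
    have hstd2 : StdRep G (fun ν => ord.lt ν B') (∑ g ∈ G, q g * g) := by
      refine ⟨q, rfl, fun g hg ν hν => ?_⟩
      by_cases hgT : g ∈ T
      · have hq : q g = h g - c g • monomial (α g) (1:F) := by rw [hqdef]; simp [hgT]
        rw [hq] at hν
        obtain ⟨a, ha, b, hb, rfl⟩ := Finset.mem_add.mp (support_mul _ _ hν)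
        have haα : a ≠ α g := by
          intro e; subst e
          have hz : coeff (α g) (h g - c g • monomial (α g) (1:F)) = 0 := by
            rw [coeff_sub, coeff_smul, coeff_monomial, if_pos rfl, smul_eq_mul,
              mul_one, hcdef, sub_self]
          exact (mem_support_iff.mp ha) hz
        have hah : a ∈ (h g).support := by
          rcases Finset.mem_union.mp (MvPolynomial.support_sub σ _ _ ha) with h' | h'
          · exact h'
          · exfalso
            apply haα
            have h'' := Finsupp.support_smul h'
            have h3 : ((monomial (α g)) (1:F)).support = {α g} := by
              simp [support_monomial]
            exact Finset.mem_singleton.mp (h3 ▸ h'')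
        have hlta : ord.lt a (α g) := ⟨(hα g hgT).2 a hah, haα⟩
        have hle2 : ord.le (α g + b) (α g + μ g) :=
          le_add_le (ord.le_refl _) ((hμ g hgT).2 b hb)
        have hfin := lt_of_lt_of_le (lt_add_right hlta b) hle2
        rwa [hsum g hgT] at hfin
      · have hq : q g = h g := by rw [hqdef]; simp [hgT]
        rw [hq] at hν
        refine ⟨hbound g hg ν hν, fun e => ?_⟩
        subst e
        exact hgT (hT ▸ Finset.mem_filter.mpr ⟨hg, hν⟩)
    have hstdf : StdRep G (fun ν => ord.lt ν B') f := by
      rw [hfS]; exact hstd1.add hstd2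
    obtain ⟨B'', hB''lt, h'', hfeq'', hbound'', g2, hg2, hlm2⟩ := stdRep_attained hf0 hstdf
    exact hBmin B'' ⟨h'', hfeq'', hbound''⟩ hB''lt
  · -- B' is the leading monomial of f and is divisible
    have hfB : IsLeadingMonomial ord f B' := by
      refine ⟨mem_support_iff.mpr hcB, fun ν hν => ?_⟩
      have hcν : coeff ν f ≠ 0 := mem_support_iff.mp hν
      rw [hfeq, coeff_eq_sum] at hcν
      obtain ⟨g, hg, hgne⟩ := Finset.exists_ne_zero_of_sum_ne_zero hcν
      exact hbound g hg ν (mem_support_iff.mpr hgne)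
    have hhg1 : h g1 ≠ 0 := by
      intro e
      have : (h g1 * g1) = 0 := by rw [e, zero_mul]
      rw [this] at hlm1
      simpa using hlm1.1
    obtain ⟨α1, hα1⟩ := lm_exists (ord := ord) hhg1
    obtain ⟨μ1, hμ1⟩ := lm_exists (ord := ord) (hG g1 hg1)
    have hsum1 : α1 + μ1 = B' := lm_unique (lm_mul hα1 hμ1) hlm1
    exact ⟨g1, hg1, μ1, B', hμ1, hfB, by rw [← hsum1]; exact le_add_self⟩
end Buch


/-- Buchberger's criterion: a finite set `G` of nonzero polynomials is a Gröbner
basis of the ideal it generates (for every nonzero `f ∈ ⟨G⟩` the leading term of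
some `g ∈ G` divides the leading term of `f`) if and only if all S-polynomials
`S(gᵢ, gⱼ)` for `gᵢ ≠ gⱼ` in `G` reduce to `0` modulo `G`. -/
theorem buchberger_criterion {m : ℕ} {F : Type} [Field F] (ord : MonomialOrd (Fin m))
    (G : Finset (MvPolynomial (Fin m) F)) (hG : ∀ g ∈ G, g ≠ 0) :
    (∀ gi ∈ G, ∀ gj ∈ G, gi ≠ gj → ∀ s, IsSPolynomial ord gi gj s →
      ReducesTo ord G s 0) ↔
    (∀ f ∈ Ideal.span (G : Set (MvPolynomial (Fin m) F)), f ≠ 0 →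
      ∃ g ∈ G, LeadTermDvd ord g f) := by
  constructor
  · intro hS f hf hf0
    exact Buch.groebner_of_spoly hG hS hf hf0
  · intro hGB gi hgi gj hgj hne s hs
    obtain ⟨μi, μj, γ, hi, hj, hγ, rfl⟩ := hs
    apply Buch.reducesTo_zero_of_groebner hGB
    refine Submodule.sub_mem _ ?_ ?_
    · exact Submodule.smul_of_tower_mem _ _
        (Ideal.mul_mem_left _ _ (Ideal.subset_span hgi))
    · exact Submodule.smul_of_tower_mem _ _
        (Ideal.mul_mem_left _ _ (Ideal.subset_span hgj))
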